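/- Let $g, \tilde{g}$ be two independent families of standard complex Gaussians indexed by $\mathbb{Z}^d$, and for $\varphi \in [0, \pi/2]$ set $g_n(\varphi) = \sin(\varphi) g_n + \cos(\varphi) \tilde{g}_n$. Fix $n_J = (n_1, \dots, n_k) \in (\mathbb{Z}^d)^k$ and signs $\iota_J \in \{\pm 1\}^k$, and let $\mathcal{L}(g_{n_J}^{\iota_J}(\varphi)) = \prod_{n} \mathcal{L}(\sigma_{n_J}(n), \mu_{\iota_J}(n), g_n(\varphi))$ be the Laguerre-type renormalized product. Then $\partial_\varphi \mathcal{L}(g_{n_J}^{\iota_J}(\varphi)) = \sum_{j \in J} \partial_\varphi[g_{n_j}^{\iota_j}(\varphi)] \, \mathcal{L}(g_{n_{J \setminus j}}^{\iota_{J \setminus j}}(\varphi))$. -/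

import Mathlib

open Polynomial


/-- Generalized Laguerre polynomials `L_m^α`. -/
noncomputable def lag (a : ℝ) : ℕ → Polynomial ℝ
  | 0 => 1
  | 1 => Polynomial.C (1 + a) - Polynomial.X
  | (m + 2) => Polynomial.C (((m : ℝ) + 2)⁻¹) *
      ((Polynomial.C (2 * (m : ℝ) + 3 + a) - Polynomial.X) * lag a (m + 1)
        - Polynomial.C ((m : ℝ) + 1 + a) * lag a m)

lemma lag_zero (a : ℝ) : lag a 0 = 1 := rfl
lemma lag_one (a : ℝ) : lag a 1 = C (1 + a) - X := rfl

lemma lag_rec (a : ℝ) (n : ℕ) :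
    C ((n:ℝ)+2) * lag a (n+2)
      = (C (2*(n:ℝ)+3+a) - X) * lag a (n+1) - C ((n:ℝ)+1+a) * lag a n := by
  have h : ((n:ℝ)+2) ≠ 0 := by positivity
  rw [lag, ← mul_assoc, ← C_mul, mul_inv_cancel₀ h, C_1, one_mul]

lemma lag_S2 (a : ℝ) (n : ℕ) :
    X * lag (a+1) n = C ((n:ℝ)+a+1) * lag a n - C ((n:ℝ)+1) * lag a (n+1) := by
  induction n using Nat.strong_induction_on with
  | _ n ih =>
    match n, ih with
    | 0, _ => simp [lag_zero, lag_one, map_add, map_one, map_ofNat]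
              ring
    | 1, _ =>
        have r00 := lag_rec a 0
        simp [lag_one, lag_zero, map_add, map_one, map_ofNat] at r00 ⊢
        linear_combination r00
    | (n+2), ih =>
        have h1 := ih (n+1) (by omega)
        have h2 := ih n (by omega)
        have r0 := lag_rec a n
        have r1 := lag_rec a (n+1)
        have r0' := lag_rec (a+1) n
        have hc : (C ((n:ℝ)+2) : ℝ[X]) ≠ 0 := by
          simp only [ne_eq, C_eq_zero]; positivity
        apply mul_left_cancel₀ hc
        push_cast at h1 h2 r0 r1 r0' ⊢
        simp only [map_add, map_mul, map_one, map_ofNat] at h1 h2 r0 r1 r0' ⊢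
        linear_combination X*r0' + (2*C (n:ℝ) + 4 + C a - X)*h1 - (C (n:ℝ) + 2 + C a)*h2
          - (C (n:ℝ) + C a + 2)*r0 + (C (n:ℝ) + 2)*r1

lemma lag_S1 (a : ℝ) (n : ℕ) : lag a (n+1) = lag (a+1) (n+1) - lag (a+1) n := by
  induction n with
  | zero => simp [lag_one, lag_zero, map_add, map_one]; ring
  | succ n ih =>
    have r0' := lag_rec (a+1) n
    have s2 := lag_S2 a (n+1)
    have hc : (C ((n:ℝ)+2) : ℝ[X]) ≠ 0 := by
      simp only [ne_eq, C_eq_zero]; positivity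
    apply mul_left_cancel₀ hc
    push_cast at r0' s2 ⊢
    simp only [map_add, map_mul, map_one, map_ofNat] at r0' s2 ⊢
    linear_combination s2 - r0' + (C (n:ℝ) + C a + 2)*ih

lemma lag_deriv (a : ℝ) (n : ℕ) :
    derivative (lag a (n+1)) = - lag (a+1) n := by
  induction n using Nat.strong_induction_on with
  | _ n ih =>
    match n, ih with
    | 0, _ => simp [lag_one, lag_zero]
    | 1, _ =>
        have hd := congrArg derivative (lag_rec a 0)
        simp [lag_one, lag_zero, derivative_mul, derivative_sub] at hd ⊢
        have hc : (C (2:ℝ) : ℝ[X]) ≠ 0 := by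
          simp only [ne_eq, C_eq_zero]; norm_num
        apply mul_left_cancel₀ hc
        simp only [map_add, map_mul, map_one, map_ofNat] at hd ⊢
        linear_combination hd
    | (n+2), ih =>
        have ih1 := ih (n+1) (by omega)
        have ih0 := ih n (by omega)
        have hd := congrArg derivative (lag_rec a (n+1))
        simp only [derivative_mul, derivative_sub, derivative_C, derivative_X,
          zero_mul, zero_sub, one_mul, zero_add, neg_mul] at hd
        have r0' := lag_rec (a+1) n
        have s1 := lag_S1 a (n+1)
        have hc : (C ((n:ℝ)+3) : ℝ[X]) ≠ 0 := by
          simp only [ne_eq, C_eq_zero]; positivity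
        apply mul_left_cancel₀ hc
        push_cast at ih1 ih0 hd r0' s1 ⊢
        simp only [map_add, map_mul, map_one, map_ofNat] at ih1 ih0 hd r0' s1 ⊢
        linear_combination hd + (2*C (n:ℝ) + 5 + C a - X)*ih1 - (C (n:ℝ) + 2 + C a)*ih0 - s1 + r0'

lemma lag_B (a : ℝ) (q : ℕ) :
    C a * lag a (q+1) - X * lag (a+1) q = C (a+(q:ℝ)+1) * lag (a-1) (q+1) := by
  have s2 := lag_S2 a q
  have s1' : lag (a-1) (q+1) = lag a (q+1) - lag a q := by
    have := lag_S1 (a-1) q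
    rwa [show a - 1 + 1 = a by ring] at this
  simp only [map_add, map_mul, map_one, map_sub, map_ofNat] at s2 s1' ⊢
  linear_combination -s2 - (C a + C (q:ℝ) + 1) * s1'


/-- `z^m` for integer `m`, interpreting negative powers as powers of the conjugate;
this models `g^{+1} = g`, `g^{-1} = ḡ` and more generally `g^μ`. -/
noncomputable def cpow (m : ℤ) (z : ℂ) : ℂ :=
  if 0 ≤ m then z ^ m.natAbs else (starRingEnd ℂ) z ^ m.natAbs

/-- The Laguerre-type renormalization
`𝓛(σ, μ, g) = (-1)^{(σ-|μ|)/2} ((σ-|μ|)/2)! L_{(σ-|μ|)/2}^{|μ|}(|g|²) g^μ`. -/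
noncomputable def Lcal (s : ℕ) (m : ℤ) (z : ℂ) : ℂ :=
  (-1 : ℂ) ^ ((s - m.natAbs) / 2) * (Nat.factorial ((s - m.natAbs) / 2) : ℂ) *
    (((lag (m.natAbs : ℝ) ((s - m.natAbs) / 2)).eval (‖z‖ ^ 2) : ℝ) : ℂ) * cpow m z

lemma Lcal_unfold (s : ℕ) (m : ℤ) (hm : 0 ≤ m) (M q' : ℕ) (h1 : m.natAbs = M)
    (h2 : (s - M) / 2 = q') (z : ℂ) :
    Lcal s m z = (-1) ^ q' * (Nat.factorial q' : ℂ) *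
      ((((lag (M : ℝ) q').eval (‖z‖ ^ 2)) : ℝ) : ℂ) * z ^ M := by
  rw [Lcal, cpow, if_pos hm, h1, h2]

lemma Lcal_unfold_neg (s : ℕ) (q' : ℕ) (h2 : (s - 1) / 2 = q') (z : ℂ) :
    Lcal s (-1) z = (-1) ^ q' * (Nat.factorial q' : ℂ) *
      ((((lag (1 : ℝ) q').eval (‖z‖ ^ 2)) : ℝ) : ℂ) * (starRingEnd ℂ) z := by
  rw [Lcal, cpow, if_neg (by omega)]
  norm_num [h2]

lemma Lcal_conj' (s : ℕ) (m : ℤ) (z : ℂ) :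
    (starRingEnd ℂ) (Lcal s m z) = Lcal s (-m) z := by
  have hnat : (-m).natAbs = m.natAbs := Int.natAbs_neg m
  rw [Lcal, Lcal, hnat]
  simp only [map_mul, map_pow, map_neg, map_one, Complex.conj_ofReal, map_natCast]
  congr 1
  rcases lt_trichotomy m 0 with h | h | h
  · rw [cpow, cpow, if_neg (by omega), if_pos (by omega), hnat, map_pow, Complex.conj_conj]
  · subst h; simp [cpow]
  · rw [cpow, cpow, if_pos (by omega), if_neg (by omega), hnat, map_pow]

lemma hasDerivAt_G (z w : ℂ) (φ : ℝ) :
    HasDerivAt (fun t : ℝ => (Real.sin t : ℂ) * z + (Real.cos t : ℂ) * w)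
      ((Real.cos φ : ℂ) * z - (Real.sin φ : ℂ) * w) φ := by
  have h1 := ((Real.hasDerivAt_sin φ).ofReal_comp).mul_const z
  have h2 := ((Real.hasDerivAt_cos φ).ofReal_comp).mul_const w
  have := h1.add h2
  simpa [Complex.ofReal_neg, sub_eq_add_neg, neg_mul, Pi.add_def] using this

lemma hasDerivAt_npow {f : ℝ → ℂ} {f' : ℂ} {x : ℝ} (r : ℕ) (h : HasDerivAt f f' x) :
    HasDerivAt (fun t => f t ^ r) ((r : ℂ) * f x ^ (r - 1) * f') x := by
  induction r with
  | zero => simpa using hasDerivAt_const x (1 : ℂ)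
  | succ R ih =>
    have H := ih.mul h
    have Hf : (fun y => f y ^ R * f y) = fun y => f y ^ (R + 1) := by
      funext y; rw [pow_succ]
    simp only [Pi.mul_def] at H
    rw [Hf] at H
    convert H using 1
    · rfl
    rcases Nat.eq_zero_or_pos R with hR | hR
    · subst hR; simp
    · have e : R - 1 + 1 = R := Nat.succ_pred_eq_of_pos hR
      rw [Nat.add_sub_cancel, ← e, pow_succ]
      push_cast
      ring

lemma hasDerivAt_aux (z w : ℂ) (φ : ℝ) (A : ℂ) (P : Polynomial ℝ) (r : ℕ) :
    HasDerivAt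
      (fun t : ℝ => A *
        (((P.eval (‖(Real.sin t : ℂ) * z + (Real.cos t : ℂ) * w‖ ^ 2)) : ℝ) : ℂ) *
        ((Real.sin t : ℂ) * z + (Real.cos t : ℂ) * w) ^ r)
      (A * (((P.derivative.eval (‖(Real.sin φ : ℂ) * z + (Real.cos φ : ℂ) * w‖ ^ 2)) : ℝ) : ℂ) *
          ((starRingEnd ℂ) ((Real.sin φ : ℂ) * z + (Real.cos φ : ℂ) * w) *
              ((Real.cos φ : ℂ) * z - (Real.sin φ : ℂ) * w) +
            ((Real.sin φ : ℂ) * z + (Real.cos φ : ℂ) * w) *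
              (starRingEnd ℂ) ((Real.cos φ : ℂ) * z - (Real.sin φ : ℂ) * w)) *
          ((Real.sin φ : ℂ) * z + (Real.cos φ : ℂ) * w) ^ r
        + A * (((P.eval (‖(Real.sin φ : ℂ) * z + (Real.cos φ : ℂ) * w‖ ^ 2)) : ℝ) : ℂ) *
          ((r : ℂ) * ((Real.sin φ : ℂ) * z + (Real.cos φ : ℂ) * w) ^ (r - 1) *
            ((Real.cos φ : ℂ) * z - (Real.sin φ : ℂ) * w))) φ := by
  set G : ℝ → ℂ := fun t => (Real.sin t : ℂ) * z + (Real.cos t : ℂ) * w with hGdef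
  set dd : ℂ := (Real.cos φ : ℂ) * z - (Real.sin φ : ℂ) * w with hdd
  have hG : HasDerivAt G dd φ := hasDerivAt_G z w φ
  have hRe : HasDerivAt (fun t => (G t).re) dd.re φ := by
    simpa [Function.comp_def] using (Complex.reCLM.hasFDerivAt.comp_hasDerivAt φ hG)
  have hIm : HasDerivAt (fun t => (G t).im) dd.im φ := by
    simpa [Function.comp_def] using (Complex.imCLM.hasFDerivAt.comp_hasDerivAt φ hG)
  have hN : HasDerivAt (fun t => ‖G t‖ ^ 2)
      (2 * (((starRingEnd ℂ) (G φ) * dd).re)) φ := by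
    have h := (hRe.mul hRe).add (hIm.mul hIm)
    have heq : (fun t => ‖G t‖ ^ 2) = fun t => (G t).re * (G t).re + (G t).im * (G t).im := by
      funext t
      rw [← Complex.normSq_apply, ← Complex.sq_norm]
    rw [heq]
    convert h using 1
    · rfl
    · rfl
    · rfl
    simp [Complex.mul_re]
    ring
  have hE : HasDerivAt (fun t => P.eval (‖G t‖ ^ 2))
      (P.derivative.eval (‖G φ‖ ^ 2) * (2 * (((starRingEnd ℂ) (G φ) * dd).re))) φ := by
    have := (P.hasDerivAt (‖G φ‖ ^ 2)).comp φ hN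
    simpa [Function.comp_def] using this
  have hP := hasDerivAt_npow r hG
  have H := ((hE.ofReal_comp).const_mul A).mul hP
  convert H using 1
  · rfl
  · rfl
  have hre : ((2 * (((starRingEnd ℂ) (G φ) * dd).re) : ℝ) : ℂ)
      = (starRingEnd ℂ) (G φ) * dd + G φ * (starRingEnd ℂ) dd := by
    rw [← Complex.add_conj]
    simp only [map_mul, Complex.conj_conj]
  rw [Complex.ofReal_mul, hre]
  simp only [hGdef]
  ring
lemma site_main (p q : ℕ) (hqp : q ≤ p) (z w : ℂ) (φ : ℝ) :
    HasDerivAt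
      (fun t : ℝ => Lcal (p + q) ((p : ℤ) - q)
        ((Real.sin t : ℂ) * z + (Real.cos t : ℂ) * w))
      ((p : ℂ) * ((Real.cos φ : ℂ) * z - (Real.sin φ : ℂ) * w) *
          Lcal (p + q - 1) ((p : ℤ) - q - 1)
            ((Real.sin φ : ℂ) * z + (Real.cos φ : ℂ) * w)
        + (q : ℂ) * (starRingEnd ℂ) ((Real.cos φ : ℂ) * z - (Real.sin φ : ℂ) * w) *
          Lcal (p + q - 1) ((p : ℤ) - q + 1)
            ((Real.sin φ : ℂ) * z + (Real.cos φ : ℂ) * w)) φ := by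
  -- uniform unfolding of the main function
  have e1 : ((p : ℤ) - q).natAbs = p - q := by omega
  have e2 : (p + q - (p - q)) / 2 = q := by omega
  have hfun : ∀ u : ℂ, Lcal (p + q) ((p : ℤ) - q) u
      = ((-1) ^ q * (Nat.factorial q : ℂ)) *
          ((((lag ((p - q : ℕ) : ℝ) q).eval (‖u‖ ^ 2)) : ℝ) : ℂ) * u ^ (p - q) := by
    intro u
    rw [Lcal_unfold (p + q) ((p : ℤ) - q) (by omega) (p - q) q e1 e2 u]
  have H0 := hasDerivAt_aux z w φ ((-1) ^ q * (Nat.factorial q : ℂ))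
      (lag ((p - q : ℕ) : ℝ) q) (p - q)
  simp only [← hfun] at H0
  -- now just prove the derivative values agree
  convert H0 using 1
  set G : ℂ := (Real.sin φ : ℂ) * z + (Real.cos φ : ℂ) * w with hGdef
  set dd : ℂ := (Real.cos φ : ℂ) * z - (Real.sin φ : ℂ) * w with hdd
  set x : ℝ := ‖G‖ ^ 2 with hx
  have hxC : G * (starRingEnd ℂ) G = (x : ℂ) := by
    rw [Complex.mul_conj, hx, ← Complex.sq_norm]
  rcases Nat.eq_zero_or_pos q with hq | hq
  · -- q = 0
    subst hq
    rcases Nat.eq_zero_or_pos p with hp | hp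
    · subst hp
      norm_num [lag_zero]
    · simp only [Nat.cast_zero, sub_zero, Nat.add_zero, Nat.sub_zero]
      have e3 : ((p : ℤ) - 1).natAbs = p - 1 := by omega
      have e4 : (p - 1 - (p - 1)) / 2 = 0 := by omega
      rw [Lcal_unfold (p - 1) ((p : ℤ) - 1) (by omega) (p - 1) 0 e3 e4]
      simp only [lag_zero, Nat.factorial_zero, pow_zero, eval_one, Complex.ofReal_one,
        Nat.cast_zero, zero_mul, add_zero, mul_one, one_mul]
      simp only [derivative_one, eval_zero, Complex.ofReal_zero, mul_zero, zero_mul,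
        zero_add]
      push_cast
      ring
  · -- q = Q + 1
    obtain ⟨Q, rfl⟩ : ∃ Q, q = Q + 1 := ⟨q - 1, by omega⟩
    have hder : derivative (lag ((p - (Q + 1) : ℕ) : ℝ) (Q + 1))
        = - lag (((p - (Q + 1) : ℕ) : ℝ) + 1) Q := lag_deriv _ Q
    rcases Nat.lt_or_ge Q (p - 1) with hpq | hpq
    · -- p > q, i.e. p = (Q+1) + (R+1)
      obtain ⟨R, rfl⟩ : ∃ R, p = (Q + 1) + (R + 1) := ⟨p - Q - 2, by omega⟩
      -- unfold the two Lcal's in the target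
      have f1 : (((Q + 1) + (R + 1) : ℕ) : ℤ) - ((Q + 1 : ℕ) : ℤ) - 1 = (R : ℤ) := by push_cast; ring
      have f2 : (((Q + 1) + (R + 1) : ℕ) : ℤ) - ((Q + 1 : ℕ) : ℤ) + 1 = ((R : ℤ) + 2) := by push_cast; ring
      rw [f1, f2]
      have g1 : ((R : ℤ)).natAbs = R := rfl
      have g2 : (((Q + 1) + (R + 1) + (Q + 1) - 1) - R) / 2 = Q + 1 := by omega
      have g3 : ((R : ℤ) + 2).natAbs = R + 2 := by omega
      have g4 : (((Q + 1) + (R + 1) + (Q + 1) - 1) - (R + 2)) / 2 = Q := by omega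
      rw [Lcal_unfold _ _ (by omega) R (Q + 1) g1 g2, Lcal_unfold _ _ (by omega) (R + 2) Q g3 g4]
      have eA : ((Q + 1) + (R + 1) - (Q + 1) : ℕ) = R + 1 := by omega
      rw [eA] at hder ⊢
      rw [hder]
      simp only [Nat.add_sub_cancel]
      -- the Laguerre identity
      have hBpoly := lag_B ((R : ℝ) + 1) Q
      have hBeval := congrArg (fun P : Polynomial ℝ => P.eval x) hBpoly
      simp only [eval_sub, eval_mul, eval_C, eval_X] at hBeval
      have hr1 : (R : ℝ) + 1 - 1 = (R : ℝ) := by ring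
      have hr2 : ((R + 1 : ℕ) : ℝ) = (R : ℝ) + 1 := by push_cast; ring
      have hr3 : ((R : ℝ) + 1) + 1 = ((R + 2 : ℕ) : ℝ) := by push_cast; ring
      rw [hr1, hr3] at hBeval
      rw [hr2, hr3]
      simp only [eval_neg, Complex.ofReal_neg]
      have hBC := congrArg (fun t : ℝ => (t : ℂ)) hBeval
      push_cast at hBC
      -- final ring identity
      rw [pow_succ (-1:ℂ) Q]
      push_cast [Nat.factorial_succ]
      linear_combination (((-1:ℂ)^Q * (-1) * (((Q:ℂ)+1) * (Nat.factorial Q : ℂ))) *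
          (((lag ((R:ℝ)+2) Q).eval x : ℝ) : ℂ) * G ^ R * dd) * hxC
        - (((-1:ℂ)^Q * (-1) * (((Q:ℂ)+1) * (Nat.factorial Q : ℂ))) * G ^ R * dd) * hBC
    · -- p = q = Q + 1
      obtain rfl : p = Q + 1 := by omega
      have f1 : ((Q + 1 : ℕ) : ℤ) - ((Q + 1 : ℕ) : ℤ) - 1 = -1 := by push_cast; ring
      have f2 : ((Q + 1 : ℕ) : ℤ) - ((Q + 1 : ℕ) : ℤ) + 1 = 1 := by push_cast; ring
      rw [f1, f2]
      have g2 : ((Q + 1) + (Q + 1) - 1 - 1) / 2 = Q := by omega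
      have g3 : ((1 : ℤ)).natAbs = 1 := rfl
      rw [Lcal_unfold_neg _ Q g2, Lcal_unfold _ _ (by omega) 1 Q g3 (by omega)]
      have eA : ((Q + 1) - (Q + 1) : ℕ) = 0 := by omega
      rw [eA] at hder ⊢
      rw [hder]
      simp only [eval_neg, Complex.ofReal_neg]
      have h01 : ((0 : ℕ) : ℝ) + 1 = (1 : ℝ) := by norm_num
      rw [h01] at hder ⊢
      rw [pow_succ (-1:ℂ) Q]
      push_cast [Nat.factorial_succ]
      simp only [pow_zero, mul_one, Nat.cast_zero, zero_mul, mul_zero, add_zero]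
      ring

lemma site (p q : ℕ) (z w : ℂ) (φ : ℝ) :
    HasDerivAt
      (fun t : ℝ => Lcal (p + q) ((p : ℤ) - q)
        ((Real.sin t : ℂ) * z + (Real.cos t : ℂ) * w))
      ((p : ℂ) * ((Real.cos φ : ℂ) * z - (Real.sin φ : ℂ) * w) *
          Lcal (p + q - 1) ((p : ℤ) - q - 1) ((Real.sin φ : ℂ) * z + (Real.cos φ : ℂ) * w)
        + (q : ℂ) * (starRingEnd ℂ) ((Real.cos φ : ℂ) * z - (Real.sin φ : ℂ) * w) *
          Lcal (p + q - 1) ((p : ℤ) - q + 1) ((Real.sin φ : ℂ) * z + (Real.cos φ : ℂ) * w)) φ := by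
  rcases le_or_gt q p with h | h
  · exact site_main p q h z w φ
  · have H := (site_main q p h.le z w φ).star
    simp only [← starRingEnd_apply] at H
    have hfun : ∀ u : ℂ, (starRingEnd ℂ) (Lcal (q + p) ((q : ℤ) - p) u)
        = Lcal (p + q) ((p : ℤ) - q) u := by
      intro u
      rw [Lcal_conj', Nat.add_comm q p, show -((q:ℤ) - p) = (p:ℤ) - q by ring]
    simp only [hfun] at H
    convert H using 1
    · rfl
    simp only [map_add, map_mul, map_natCast, Complex.conj_conj, Lcal_conj']
    rw [show -((q:ℤ) - p - 1) = (p:ℤ) - q + 1 by ring,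
        show -((q:ℤ) - p + 1) = (p:ℤ) - q - 1 by ring,
        show q + p - 1 = p + q - 1 by omega]
    ring

lemma Lcal_zero_zero (z : ℂ) : Lcal 0 0 z = 1 := by
  simp [Lcal, cpow, lag_zero]

lemma cpow_one' (z : ℂ) : cpow 1 z = z := by simp [cpow]

lemma cpow_neg_one' (z : ℂ) : cpow (-1) z = (starRingEnd ℂ) z := by
  rw [cpow, if_neg (by omega)]
  norm_num
/-- The Laguerre-type renormalized product `𝓛(g_{n_J}^{ι_J})`:
`∏_n 𝓛(σ_{n_J}(n), μ_{ι_J}(n), g_n)` (all but finitely many factors equal `1`). -/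
noncomputable def Lprod {V J : Type*} [Fintype J] [DecidableEq V]
    (nJ : J → V) (ι : J → ℤ) (g : V → ℂ) : ℂ :=
  ∏ n ∈ Finset.image nJ Finset.univ,
    Lcal (Finset.univ.filter fun j => nJ j = n).card
      (∑ j ∈ Finset.univ.filter fun j => nJ j = n, ι j) (g n)

theorem Lprod_hasDerivAt_gen {V J : Type*} [Fintype J] [DecidableEq J] [DecidableEq V]
    (nJ : J → V) (ι : J → ℤ) (hι : ∀ j, ι j = 1 ∨ ι j = -1) (g g' : V → ℂ) (φ : ℝ) :
    HasDerivAt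
      (fun t : ℝ => Lprod nJ ι
        (fun n => (Real.sin t : ℂ) * g n + (Real.cos t : ℂ) * g' n))
      (∑ j : J,
        cpow (ι j) ((Real.cos φ : ℂ) * g (nJ j) - (Real.sin φ : ℂ) * g' (nJ j)) *
          Lprod (fun i : {i : J // i ≠ j} => nJ i) (fun i : {i : J // i ≠ j} => ι i)
            (fun n => (Real.sin φ : ℂ) * g n + (Real.cos φ : ℂ) * g' n))
      φ := by
  classical
  set S : Finset V := Finset.image nJ Finset.univ with hS
  set pn : V → ℕ := fun n => (Finset.univ.filter fun j => nJ j = n ∧ ι j = 1).card with hpn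
  set qn : V → ℕ := fun n => (Finset.univ.filter fun j => nJ j = n ∧ ι j = -1).card with hqn
  have hfil : ∀ n, (Finset.univ.filter fun a => nJ a = n ∧ ¬ι a = 1)
      = (Finset.univ.filter fun a => nJ a = n ∧ ι a = -1) := by
    intro n
    apply Finset.filter_congr
    intro x _
    rcases hι x with h1 | h1 <;> simp [h1]
  have hcard : ∀ n, (Finset.univ.filter fun j => nJ j = n).card = pn n + qn n := by
    intro n
    rw [hpn, hqn]
    rw [← Finset.card_filter_add_card_filter_not
      (s := Finset.univ.filter fun j => nJ j = n) (p := fun j => ι j = 1)]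
    rw [Finset.filter_filter, Finset.filter_filter, hfil n]
  have hsum : ∀ n, (∑ j ∈ Finset.univ.filter fun j => nJ j = n, ι j)
      = (pn n : ℤ) - qn n := by
    intro n
    rw [← Finset.sum_filter_add_sum_filter_not
      (Finset.univ.filter fun j => nJ j = n) (fun j => ι j = 1) ι]
    rw [Finset.filter_filter, Finset.filter_filter, hfil n]
    have h1 : ∑ j ∈ Finset.univ.filter fun a => nJ a = n ∧ ι a = 1, ι j = (pn n : ℤ) := by
      rw [Finset.sum_congr rfl (fun x hx => (Finset.mem_filter.mp hx).2.2), hpn]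
      simp [mul_comm]
    have h2 : ∑ j ∈ Finset.univ.filter fun a => nJ a = n ∧ ι a = -1, ι j = -(qn n : ℤ) := by
      rw [Finset.sum_congr rfl (fun x hx => (Finset.mem_filter.mp hx).2.2), hqn]
      simp [mul_comm]
    rw [h1, h2]
    ring
  have hsite : ∀ n ∈ S, HasDerivAt
      (fun t : ℝ => Lcal ((Finset.univ.filter fun j => nJ j = n).card)
        (∑ j ∈ Finset.univ.filter fun j => nJ j = n, ι j)
        ((Real.sin t : ℂ) * g n + (Real.cos t : ℂ) * g' n))
      ((pn n : ℂ) * ((Real.cos φ : ℂ) * g n - (Real.sin φ : ℂ) * g' n) *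
          Lcal ((Finset.univ.filter fun j => nJ j = n).card - 1)
            ((∑ j ∈ Finset.univ.filter fun j => nJ j = n, ι j) - 1)
            ((Real.sin φ : ℂ) * g n + (Real.cos φ : ℂ) * g' n)
        + (qn n : ℂ) * (starRingEnd ℂ) ((Real.cos φ : ℂ) * g n - (Real.sin φ : ℂ) * g' n) *
          Lcal ((Finset.univ.filter fun j => nJ j = n).card - 1)
            ((∑ j ∈ Finset.univ.filter fun j => nJ j = n, ι j) + 1)
            ((Real.sin φ : ℂ) * g n + (Real.cos φ : ℂ) * g' n)) φ := by
    intro n _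
    have H := site (pn n) (qn n) (g n) (g' n) φ
    rw [← hcard n, ← hsum n] at H
    exact H
  have Hprod := HasDerivAt.finset_prod hsite
  have C1 : ∀ j : J,
      Lprod (fun i : {i : J // i ≠ j} => nJ ↑i) (fun i : {i : J // i ≠ j} => ι ↑i)
        (fun n => (Real.sin φ : ℂ) * g n + (Real.cos φ : ℂ) * g' n)
      = Lcal ((Finset.univ.filter fun i => nJ i = nJ j).card - 1)
          ((∑ i ∈ Finset.univ.filter fun i => nJ i = nJ j, ι i) - ι j)
          ((Real.sin φ : ℂ) * g (nJ j) + (Real.cos φ : ℂ) * g' (nJ j))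
        * ∏ n ∈ S.erase (nJ j),
            Lcal ((Finset.univ.filter fun i => nJ i = n).card)
              (∑ i ∈ Finset.univ.filter fun i => nJ i = n, ι i)
              ((Real.sin φ : ℂ) * g n + (Real.cos φ : ℂ) * g' n) := by
    intro j
    have hsub : ∀ {M : Type} [AddCommMonoid M] (f : J → M) (n : V),
        (∑ i ∈ Finset.filter (fun i : {i : J // i ≠ j} => nJ i.val = n)
            (Finset.univ : Finset {i : J // i ≠ j}), f i.val)
        = ∑ i ∈ (Finset.univ.erase j).filter fun i => nJ i = n, f i := by
      intro M _ f n
      refine Finset.sum_bij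
        (s := Finset.filter (fun i : {i : J // i ≠ j} => nJ i.val = n)
            (Finset.univ : Finset {i : J // i ≠ j}))
        (t := (Finset.univ.erase j).filter fun i => nJ i = n)
        (f := fun i : {i : J // i ≠ j} => f i.val) (g := f)
        (fun a _ => a.val) ?_ ?_ ?_ ?_
      · intro a ha
        simp only [Finset.mem_filter, Finset.mem_univ, true_and] at ha
        simp only [Finset.mem_filter, Finset.mem_erase]
        exact ⟨⟨a.2, Finset.mem_univ _⟩, ha⟩
      · intro a _ b _ h
        exact Subtype.ext h
      · intro b hb
        simp only [Finset.mem_filter, Finset.mem_erase] at hb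
        exact ⟨⟨b, hb.1.1⟩, by simp [hb.2], rfl⟩
      · intro a _
        rfl
    have hc : ∀ n : V, (Finset.filter (fun i : {i : J // i ≠ j} => nJ i.val = n)
          (Finset.univ : Finset {i : J // i ≠ j})).card
        = ((Finset.univ.erase j).filter fun i => nJ i = n).card := by
      intro n
      rw [Finset.card_eq_sum_ones, Finset.card_eq_sum_ones]
      exact hsub (fun _ => 1) n
    have himg : Finset.image (fun i : {i : J // i ≠ j} => nJ ↑i) Finset.univ
        = Finset.image nJ (Finset.univ.erase j) := by
      ext v
      simp [Finset.mem_image, Finset.mem_erase, Subtype.exists]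
    rw [Lprod]
    simp only [hsub, hc]
    rw [himg]
    have hsubset : Finset.image nJ (Finset.univ.erase j) ⊆ S := by
      rw [hS]
      exact Finset.image_subset_image (Finset.erase_subset j Finset.univ)
    have hvan : ∀ n ∈ S, n ∉ Finset.image nJ (Finset.univ.erase j) →
        Lcal (((Finset.univ.erase j).filter fun i => nJ i = n).card)
          (∑ i ∈ (Finset.univ.erase j).filter fun i => nJ i = n, ι i)
          ((Real.sin φ : ℂ) * g n + (Real.cos φ : ℂ) * g' n) = 1 := by
      intro n _ hnot
      have hemp : (Finset.univ.erase j).filter (fun i => nJ i = n) = ∅ := by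
        rw [Finset.filter_eq_empty_iff]
        intro i hi hin
        exact hnot (Finset.mem_image.mpr ⟨i, hi, hin⟩)
      rw [hemp]
      simpa using Lcal_zero_zero _
    rw [Finset.prod_subset hsubset hvan]
    have hmem : nJ j ∈ S := Finset.mem_image_of_mem nJ (Finset.mem_univ j)
    rw [← Finset.mul_prod_erase S _ hmem]
    congr 1
    · rw [Finset.filter_erase, Finset.card_erase_of_mem (by simp),
        Finset.sum_erase_eq_sub (by simp)]
    · apply Finset.prod_congr rfl
      intro n hn
      have hne : ¬ (nJ j = n) := fun h => ((Finset.mem_erase.mp hn).1 h.symm)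
      rw [Finset.filter_erase, Finset.erase_eq_of_notMem (by simp [hne])]
  -- assemble
  have hmemS : ∀ jj : J, nJ jj ∈ S := fun jj => Finset.mem_image_of_mem nJ (Finset.mem_univ jj)
  show HasDerivAt (fun t : ℝ => ∏ n ∈ S,
      Lcal ((Finset.univ.filter fun j => nJ j = n).card)
        (∑ j ∈ Finset.univ.filter fun j => nJ j = n, ι j)
        ((Real.sin t : ℂ) * g n + (Real.cos t : ℂ) * g' n)) _ φ
  convert Hprod using 1
  · rfl
  · ext t; rw [Finset.prod_apply]
  rw [← Finset.sum_fiberwise_of_maps_to (fun j _ => hmemS j)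
    (fun j => cpow (ι j) ((Real.cos φ : ℂ) * g (nJ j) - (Real.sin φ : ℂ) * g' (nJ j)) *
      Lprod (fun i : {i : J // i ≠ j} => nJ i) (fun i : {i : J // i ≠ j} => ι i)
        (fun n => (Real.sin φ : ℂ) * g n + (Real.cos φ : ℂ) * g' n))]
  apply Finset.sum_congr rfl
  intro n hn
  have hterm : ∀ j ∈ Finset.univ.filter (fun j => nJ j = n),
      cpow (ι j) ((Real.cos φ : ℂ) * g (nJ j) - (Real.sin φ : ℂ) * g' (nJ j)) *
        Lprod (fun i : {i : J // i ≠ j} => nJ i) (fun i : {i : J // i ≠ j} => ι i)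
          (fun n => (Real.sin φ : ℂ) * g n + (Real.cos φ : ℂ) * g' n)
      = cpow (ι j) ((Real.cos φ : ℂ) * g n - (Real.sin φ : ℂ) * g' n) *
          (Lcal ((Finset.univ.filter fun i => nJ i = n).card - 1)
            ((∑ i ∈ Finset.univ.filter fun i => nJ i = n, ι i) - ι j)
            ((Real.sin φ : ℂ) * g n + (Real.cos φ : ℂ) * g' n)
          * ∏ m ∈ S.erase n,
              Lcal ((Finset.univ.filter fun i => nJ i = m).card)
                (∑ i ∈ Finset.univ.filter fun i => nJ i = m, ι i)
                ((Real.sin φ : ℂ) * g m + (Real.cos φ : ℂ) * g' m)) := by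
    intro j hj
    have hjn : nJ j = n := (Finset.mem_filter.mp hj).2
    rw [C1 j, hjn]
  rw [Finset.sum_congr rfl hterm]
  rw [← Finset.sum_filter_add_sum_filter_not
    (Finset.univ.filter fun j => nJ j = n) (fun j => ι j = 1)]
  rw [Finset.filter_filter, Finset.filter_filter, hfil n]
  have hA : ∀ j ∈ Finset.univ.filter (fun a => nJ a = n ∧ ι a = 1),
      cpow (ι j) ((Real.cos φ : ℂ) * g n - (Real.sin φ : ℂ) * g' n) *
          (Lcal ((Finset.univ.filter fun i => nJ i = n).card - 1)
            ((∑ i ∈ Finset.univ.filter fun i => nJ i = n, ι i) - ι j)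
            ((Real.sin φ : ℂ) * g n + (Real.cos φ : ℂ) * g' n)
          * ∏ m ∈ S.erase n,
              Lcal ((Finset.univ.filter fun i => nJ i = m).card)
                (∑ i ∈ Finset.univ.filter fun i => nJ i = m, ι i)
                ((Real.sin φ : ℂ) * g m + (Real.cos φ : ℂ) * g' m))
      = cpow 1 ((Real.cos φ : ℂ) * g n - (Real.sin φ : ℂ) * g' n) *
          (Lcal ((Finset.univ.filter fun i => nJ i = n).card - 1)
            ((∑ i ∈ Finset.univ.filter fun i => nJ i = n, ι i) - 1)
            ((Real.sin φ : ℂ) * g n + (Real.cos φ : ℂ) * g' n)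
          * ∏ m ∈ S.erase n,
              Lcal ((Finset.univ.filter fun i => nJ i = m).card)
                (∑ i ∈ Finset.univ.filter fun i => nJ i = m, ι i)
                ((Real.sin φ : ℂ) * g m + (Real.cos φ : ℂ) * g' m)) := by
    intro j hj
    rw [(Finset.mem_filter.mp hj).2.2]
  have hB : ∀ j ∈ Finset.univ.filter (fun a => nJ a = n ∧ ι a = -1),
      cpow (ι j) ((Real.cos φ : ℂ) * g n - (Real.sin φ : ℂ) * g' n) *
          (Lcal ((Finset.univ.filter fun i => nJ i = n).card - 1)
            ((∑ i ∈ Finset.univ.filter fun i => nJ i = n, ι i) - ι j)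
            ((Real.sin φ : ℂ) * g n + (Real.cos φ : ℂ) * g' n)
          * ∏ m ∈ S.erase n,
              Lcal ((Finset.univ.filter fun i => nJ i = m).card)
                (∑ i ∈ Finset.univ.filter fun i => nJ i = m, ι i)
                ((Real.sin φ : ℂ) * g m + (Real.cos φ : ℂ) * g' m))
      = cpow (-1) ((Real.cos φ : ℂ) * g n - (Real.sin φ : ℂ) * g' n) *
          (Lcal ((Finset.univ.filter fun i => nJ i = n).card - 1)
            ((∑ i ∈ Finset.univ.filter fun i => nJ i = n, ι i) - (-1))
            ((Real.sin φ : ℂ) * g n + (Real.cos φ : ℂ) * g' n)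
          * ∏ m ∈ S.erase n,
              Lcal ((Finset.univ.filter fun i => nJ i = m).card)
                (∑ i ∈ Finset.univ.filter fun i => nJ i = m, ι i)
                ((Real.sin φ : ℂ) * g m + (Real.cos φ : ℂ) * g' m)) := by
    intro j hj
    rw [(Finset.mem_filter.mp hj).2.2]
  rw [Finset.sum_congr rfl hA, Finset.sum_congr rfl hB,
    Finset.sum_const, Finset.sum_const]
  simp only [smul_eq_mul, nsmul_eq_mul, cpow_one', cpow_neg_one', sub_neg_eq_add, hpn, hqn]
  ring

/-- **Derivative of the interpolated Laguerre-type renormalized product.** With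
`g_n(φ) = sin(φ) gₙ + cos(φ) g̃ₙ`, one has
`∂_φ 𝓛(g_{n_J}^{ι_J}(φ)) = ∑_j ∂_φ[g_{n_j}^{ι_j}(φ)] 𝓛(g_{n_{J∖j}}^{ι_{J∖j}}(φ))`. -/
theorem Lprod_hasDerivAt {d k : ℕ} (nJ : Fin k → Fin d → ℤ) (ι : Fin k → ℤ)
    (hι : ∀ j, ι j = 1 ∨ ι j = -1) (g g' : (Fin d → ℤ) → ℂ) (φ : ℝ) :
    HasDerivAt
      (fun φ : ℝ => Lprod nJ ι
        (fun n => (Real.sin φ : ℂ) * g n + (Real.cos φ : ℂ) * g' n))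
      (∑ j : Fin k,
        cpow (ι j) ((Real.cos φ : ℂ) * g (nJ j) - (Real.sin φ : ℂ) * g' (nJ j)) *
          Lprod (fun i : {i : Fin k // i ≠ j} => nJ i) (fun i : {i : Fin k // i ≠ j} => ι i)
            (fun n => (Real.sin φ : ℂ) * g n + (Real.cos φ : ℂ) * g' n))
      φ := by
  exact Lprod_hasDerivAt_gen nJ ι hι g g' φ
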